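/- arXiv:cs/0207037 — 12 statements merged into one kernel-verified Lean document; each statement's English description precedes it below -/
import Mathlib

section
/- The consequence operation C_WBD of the logic WBD satisfies Inclusion (Γ ⊆ C_WBD(Γ)), Idempotency (C_WBD(Γ) = C_WBD(C_WBD(Γ))), Monotonicity (Γ ⊆ Δ implies C_WBD(Γ) ⊆ C_WBD(Δ)), and Compactness (if α ∈ C_WBD(Γ) then α ∈ C_WBD(Γ′) for some finite Γ′ ⊆ Γ), for all information sets Γ, Δ ⊆ L and all α ∈ L. -/
/-- Propositional formulas over a set of atoms `A`, with the usual connectives,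
`⊥` and `⊤`. -/
inductive PLForm (A : Type) : Type
  | atom   : A → PLForm A
  | falsum : PLForm A
  | verum  : PLForm A
  | neg    : PLForm A → PLForm A
  | conj   : PLForm A → PLForm A → PLForm A
  | disj   : PLForm A → PLForm A → PLForm A
  | impl   : PLForm A → PLForm A → PLForm A

/-- Evaluation of a propositional formula under a classical valuation. -/
def PLForm.eval {A : Type} (v : A → Bool) : PLForm A → Bool
  | .atom a   => v a
  | .falsum   => false
  | .verum    => true
  | .neg φ    => !(PLForm.eval v φ)
  | .conj φ ψ => PLForm.eval v φ && PLForm.eval v ψ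
  | .disj φ ψ => PLForm.eval v φ || PLForm.eval v ψ
  | .impl φ ψ => !(PLForm.eval v φ) || PLForm.eval v ψ

/-- Classical propositional consequence `X ⊢_PL φ`: every valuation satisfying
all members of `X` satisfies `φ`. -/
def PLCons {A : Type} (X : Set (PLForm A)) (φ : PLForm A) : Prop :=
  ∀ v : A → Bool, (∀ ψ ∈ X, PLForm.eval v ψ = true) → PLForm.eval v φ = true

/-- The language `L = L_B ∪ L_D`: a potential belief `φ` or a potential
disbelief `φ̄` for each propositional formula `φ`. -/
inductive LSent (A : Type) : Type
  | bel : PLForm A → LSent A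
  | dis : PLForm A → LSent A

/-- The set of potential beliefs `L_B`. -/
def LB (A : Type) : Set (LSent A) := Set.range LSent.bel

/-- The set of potential disbeliefs `L_D`. -/
def LD (A : Type) : Set (LSent A) := Set.range LSent.dis

/-- The propositional formulas believed in `Γ` (so that `Γ_B` corresponds to
`LSent.bel '' bels Γ = Γ ∩ LB A`). -/
def bels {A : Type} (Γ : Set (LSent A)) : Set (PLForm A) := {φ | LSent.bel φ ∈ Γ}

/-- The propositional formulas disbelieved in `Γ`. -/
def diss {A : Type} (Γ : Set (LSent A)) : Set (PLForm A) := {φ | LSent.dis φ ∈ Γ}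

/-- The logic WBD: smallest relation closed under (B), (D⊥) and (WD). -/
inductive WBD {A : Type} : Set (LSent A) → LSent A → Prop
  | B {Γ : Set (LSent A)} {φ : PLForm A} :
      PLCons (bels Γ) φ → WBD Γ (.bel φ)
  | Dbot {Γ : Set (LSent A)} {φ : PLForm A} :
      PLCons {φ} .falsum → WBD Γ (.dis φ)
  | WD {Γ : Set (LSent A)} {φ ψ : PLForm A} :
      LSent.dis ψ ∈ Γ → PLCons {φ} ψ → WBD Γ (.dis φ)

/-- The logic GBD: smallest relation closed under (B), (D⊥) and (GD). -/
inductive GBD {A : Type} : Set (LSent A) → LSent A → Prop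
  | B {Γ : Set (LSent A)} {φ : PLForm A} :
      PLCons (bels Γ) φ → GBD Γ (.bel φ)
  | Dbot {Γ : Set (LSent A)} {φ : PLForm A} :
      PLCons {φ} .falsum → GBD Γ (.dis φ)
  | GD {Γ : Set (LSent A)} {φ : PLForm A} :
      PLCons (PLForm.neg '' diss Γ) (.neg φ) → GBD Γ (.dis φ)

/-- The logic BD: smallest relation closed under (B), (D⊥) and (D). -/
inductive BD {A : Type} : Set (LSent A) → LSent A → Prop
  | B {Γ : Set (LSent A)} {φ : PLForm A} :
      PLCons (bels Γ) φ → BD Γ (.bel φ)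
  | Dbot {Γ : Set (LSent A)} {φ : PLForm A} :
      PLCons {φ} .falsum → BD Γ (.dis φ)
  | D {Γ : Set (LSent A)} {φ ψ : PLForm A} :
      LSent.dis ψ ∈ Γ → PLCons (insert φ (bels Γ)) ψ → BD Γ (.dis φ)

/-- The logic BN: smallest relation closed under (B), (D⊥), (WD) and (D→B). -/
inductive BN {A : Type} : Set (LSent A) → LSent A → Prop
  | B {Γ : Set (LSent A)} {φ : PLForm A} :
      PLCons (bels Γ) φ → BN Γ (.bel φ)
  | Dbot {Γ : Set (LSent A)} {φ : PLForm A} :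
      PLCons {φ} .falsum → BN Γ (.dis φ)
  | WD {Γ : Set (LSent A)} {φ ψ : PLForm A} :
      LSent.dis ψ ∈ Γ → PLCons {φ} ψ → BN Γ (.dis φ)
  | DtoB {Γ : Set (LSent A)} {φ : PLForm A} :
      BN Γ (.dis φ) → BN Γ (.bel (.neg φ))

/-- Satisfaction in a WBD-model `(M, 𝒩)` (also used for BD-models):
a belief `φ` holds iff `M ⊆ M(φ)`; a disbelief `φ̄` holds iff some
`N ∈ 𝒩` satisfies `N ⊆ M(¬φ)`. -/
def satWBD {A : Type} (M : Set (A → Bool)) (𝒩 : Set (Set (A → Bool))) :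
    LSent A → Prop
  | .bel φ => ∀ v ∈ M, PLForm.eval v φ = true
  | .dis φ => ∃ N ∈ 𝒩, ∀ v ∈ N, PLForm.eval v φ = false

/-- WBD-entailment: truth in all WBD-models (with `𝒩` nonempty) of `Γ`. -/
def WBDent {A : Type} (Γ : Set (LSent A)) (α : LSent A) : Prop :=
  ∀ (M : Set (A → Bool)) (𝒩 : Set (Set (A → Bool))), 𝒩.Nonempty →
    (∀ β ∈ Γ, satWBD M 𝒩 β) → satWBD M 𝒩 α

/-- Satisfaction in a GBD-model `(M, N)`. -/
def satGBD {A : Type} (M N : Set (A → Bool)) : LSent A → Prop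
  | .bel φ => ∀ v ∈ M, PLForm.eval v φ = true
  | .dis φ => ∀ v ∈ N, PLForm.eval v φ = false

/-- GBD-entailment: truth in all GBD-models of `Γ`. -/
def GBDent {A : Type} (Γ : Set (LSent A)) (α : LSent A) : Prop :=
  ∀ (M N : Set (A → Bool)), (∀ β ∈ Γ, satGBD M N β) → satGBD M N α

/-- BD-entailment: truth in all BD-models of `Γ`, i.e. WBD-models where
every `N ∈ 𝒩` is a subset of `M`. -/
def BDent {A : Type} (Γ : Set (LSent A)) (α : LSent A) : Prop :=
  ∀ (M : Set (A → Bool)) (𝒩 : Set (Set (A → Bool))), 𝒩.Nonempty →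
    (∀ N ∈ 𝒩, N ⊆ M) → (∀ β ∈ Γ, satWBD M 𝒩 β) → satWBD M 𝒩 α

/-- `Γ` is B-inconsistent iff `Γ_B ⊢_BD ⊥`. -/
def BIncons {A : Type} (Γ : Set (LSent A)) : Prop :=
  BD (Γ ∩ LB A) (.bel .falsum)

/-- `Γ` is D-inconsistent iff `Γ_D ⊢_BD ⊤̄`. -/
def DIncons {A : Type} (Γ : Set (LSent A)) : Prop :=
  BD (Γ ∩ LD A) (.dis .verum)

/-- `Γ` is BD-inconsistent iff `Γ ⊢_BD φ` and `Γ ⊢_BD φ̄` for some `φ ∈ L_B`. -/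
def BDIncons {A : Type} (Γ : Set (LSent A)) : Prop :=
  ∃ φ : PLForm A, BD Γ (.bel φ) ∧ BD Γ (.dis φ)

section Aux

open Classical

/-- Compactness of classical propositional consequence. -/
lemma pl_compact {A : Type} {X : Set (PLForm A)} {φ : PLForm A}
    (h : PLCons X φ) : ∃ Y ⊆ X, Y.Finite ∧ PLCons Y φ := by
  by_contra hc
  push_neg at hc
  -- for each finite set of elements of X, a valuation satisfying it but not φ
  have key : ∀ F : Finset {ψ // ψ ∈ X}, ∃ v : A → Bool,
      (∀ ψ ∈ F, PLForm.eval v ψ.val = true) ∧ PLForm.eval v φ = false := by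
    intro F
    have hY : (Subtype.val '' (F : Set {ψ // ψ ∈ X})) ⊆ X := by
      rintro _ ⟨⟨ψ, hψ⟩, _, rfl⟩; exact hψ
    have hfin : (Subtype.val '' (F : Set {ψ // ψ ∈ X})).Finite :=
      (F.finite_toSet).image _
    have := hc _ hY hfin
    unfold PLCons at this
    push_neg at this
    obtain ⟨v, hv, hvφ⟩ := this
    refine ⟨v, fun ψ hψ => hv _ ⟨ψ, hψ, rfl⟩, ?_⟩
    simpa using hvφ
  choose v hv hvφ using key
  -- ultrafilter on the directed set of finite subsets
  have : Nonempty (Finset {ψ // ψ ∈ X}) := ⟨∅⟩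
  let U : Ultrafilter (Finset {ψ // ψ ∈ X}) := Ultrafilter.of Filter.atTop
  have hU : (U : Filter (Finset {ψ // ψ ∈ X})) ≤ Filter.atTop :=
    Ultrafilter.of_le _
  let w : A → Bool := fun a => if {F | v F a = true} ∈ U then true else false
  have main : ∀ χ : PLForm A,
      {F | PLForm.eval (v F) χ = PLForm.eval w χ} ∈ U := by
    intro χ
    induction χ with
    | atom a =>
        by_cases ha : {F | v F a = true} ∈ U
        · have hw : w a = true := by simp [w, ha]
          simpa [PLForm.eval, hw] using ha
        · have hw : w a = false := by simp [w, ha]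
          have : {F | v F a = true}ᶜ ∈ U := (Ultrafilter.compl_mem_iff_notMem).2 ha
          refine U.toFilter.mem_of_superset this ?_
          intro F hF
          simp only [Set.mem_compl_iff, Set.mem_setOf_eq, Bool.not_eq_true] at hF
          simp [PLForm.eval, hF, hw]
    | falsum => exact Filter.univ_mem' (fun F => by simp [PLForm.eval])
    | verum => exact Filter.univ_mem' (fun F => by simp [PLForm.eval])
    | neg χ ih =>
        refine U.toFilter.mem_of_superset ih ?_
        intro F hF
        simp only [Set.mem_setOf_eq, PLForm.eval] at hF ⊢
        rw [hF]
    | conj χ₁ χ₂ ih₁ ih₂ =>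
        refine U.toFilter.mem_of_superset (Filter.inter_mem ih₁ ih₂) ?_
        rintro F ⟨h₁, h₂⟩
        simp only [Set.mem_setOf_eq, PLForm.eval] at *
        rw [h₁, h₂]
    | disj χ₁ χ₂ ih₁ ih₂ =>
        refine U.toFilter.mem_of_superset (Filter.inter_mem ih₁ ih₂) ?_
        rintro F ⟨h₁, h₂⟩
        simp only [Set.mem_setOf_eq, PLForm.eval] at *
        rw [h₁, h₂]
    | impl χ₁ χ₂ ih₁ ih₂ =>
        refine U.toFilter.mem_of_superset (Filter.inter_mem ih₁ ih₂) ?_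
        rintro F ⟨h₁, h₂⟩
        simp only [Set.mem_setOf_eq, PLForm.eval] at *
        rw [h₁, h₂]
  -- w satisfies all of X
  have hwX : ∀ ψ ∈ X, PLForm.eval w ψ = true := by
    intro ψ hψ
    have hmem : {F : Finset {ψ' // ψ' ∈ X} | (⟨ψ, hψ⟩ : {ψ' // ψ' ∈ X}) ∈ F} ∈ U := by
      apply hU
      exact Filter.mem_atTop_sets.2 ⟨{⟨ψ, hψ⟩}, fun F hF => hF (Finset.mem_singleton_self _)⟩
    have := Filter.inter_mem hmem (main ψ)
    obtain ⟨F, hF₁, hF₂⟩ := (U.toFilter.nonempty_of_mem this)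
    rw [← hF₂]
    exact hv F _ hF₁
  -- but w does not satisfy φ
  have hwφ : PLForm.eval w φ = false := by
    obtain ⟨F, hF⟩ := U.toFilter.nonempty_of_mem (main φ)
    rw [← hF]; exact hvφ F
  have := h w hwX
  rw [hwφ] at this
  exact Bool.false_ne_true this

lemma pl_mono {A : Type} {X Y : Set (PLForm A)} {φ : PLForm A}
    (hXY : X ⊆ Y) (h : PLCons X φ) : PLCons Y φ :=
  fun v hv => h v fun ψ hψ => hv ψ (hXY hψ)

lemma pl_trans {A : Type} {φ ψ χ : PLForm A}
    (h₁ : PLCons {φ} ψ) (h₂ : PLCons {ψ} χ) : PLCons {φ} χ := by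
  intro v hv
  exact h₂ v (by simpa using h₁ v hv)

end Aux

/-- The consequence operation of WBD satisfies Inclusion, Idempotency,
Monotonicity and Compactness. -/
theorem wbd_tarskian_compact (A : Type) :
    (∀ Γ : Set (LSent A), Γ ⊆ {α | WBD Γ α}) ∧
    (∀ Γ : Set (LSent A), {α | WBD Γ α} = {α | WBD {β | WBD Γ β} α}) ∧
    (∀ Γ Δ : Set (LSent A), Γ ⊆ Δ → {α | WBD Γ α} ⊆ {α | WBD Δ α}) ∧
    (∀ (Γ : Set (LSent A)) (α : LSent A), WBD Γ α →
      ∃ Γ' ⊆ Γ, Γ'.Finite ∧ WBD Γ' α) := by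
  have incl : ∀ Γ : Set (LSent A), Γ ⊆ {α | WBD Γ α} := by
    intro Γ α hα
    cases α with
    | bel φ => exact WBD.B (fun v hv => hv φ hα)
    | dis φ => exact WBD.WD hα (fun v hv => hv φ (Set.mem_singleton _))
  have mono : ∀ Γ Δ : Set (LSent A), Γ ⊆ Δ → {α | WBD Γ α} ⊆ {α | WBD Δ α} := by
    intro Γ Δ hΓΔ α hα
    cases hα with
    | B h => exact WBD.B (pl_mono (fun ψ hψ => hΓΔ hψ) h)
    | Dbot h => exact WBD.Dbot h
    | WD hmem h => exact WBD.WD (hΓΔ hmem) h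
  refine ⟨incl, ?_, mono, ?_⟩
  · intro Γ
    apply Set.Subset.antisymm
    · exact mono _ _ (incl Γ)
    · intro α hα
      cases hα with
      | @B φ h =>
          refine WBD.B (fun v hv => h v ?_)
          intro ψ hψ
          cases (hψ : WBD Γ (.bel ψ)) with
          | B h' => exact h' v hv
      | Dbot h => exact WBD.Dbot h
      | @WD φ ψ hmem h =>
          cases (hmem : WBD Γ (.dis ψ)) with
          | Dbot h' => exact WBD.Dbot (pl_trans h h')
          | WD hmem' h' => exact WBD.WD hmem' (pl_trans h h')
  · intro Γ α hα
    cases hα with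
    | @B φ h =>
        obtain ⟨Y, hYX, hYfin, hY⟩ := pl_compact h
        refine ⟨LSent.bel '' Y, ?_, hYfin.image _, ?_⟩
        · rintro _ ⟨ψ, hψ, rfl⟩; exact hYX hψ
        · refine WBD.B (pl_mono ?_ hY)
          intro ψ hψ
          exact ⟨ψ, hψ, rfl⟩
    | Dbot h => exact ⟨∅, Set.empty_subset _, Set.finite_empty, WBD.Dbot h⟩
    | @WD φ ψ hmem h =>
        exact ⟨{LSent.dis ψ}, by simpa using hmem, Set.finite_singleton _,
          WBD.WD rfl h⟩
end

section
/- The relation ⊢_WBD satisfies (B↛D): for every information set Γ ⊆ L, every Ω ⊆ L_B, and every φ ∈ L_B, Γ ⊢_WBD φ̄ iff Γ_D ∪ Ω ⊢_WBD φ̄; and (D↛B): for every information set Γ ⊆ L, every Δ ⊆ L_D, and every φ ∈ L_B, Γ ⊢_WBD φ iff Γ_B ∪ Δ ⊢_WBD φ. -/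
/-- `⊢_WBD` satisfies (B↛D) and (D↛B). -/
theorem wbd_decoupled (A : Type) :
    (∀ (Γ Ω : Set (LSent A)), Ω ⊆ LB A → ∀ φ : PLForm A,
      (WBD Γ (.dis φ) ↔ WBD ((Γ ∩ LD A) ∪ Ω) (.dis φ))) ∧
    (∀ (Γ Δ : Set (LSent A)), Δ ⊆ LD A → ∀ φ : PLForm A,
      (WBD Γ (.bel φ) ↔ WBD ((Γ ∩ LB A) ∪ Δ) (.bel φ))) := by
  constructor
  · intro Γ Ω hΩ φ
    have hmem : ∀ ψ : PLForm A, LSent.dis ψ ∈ (Γ ∩ LD A) ∪ Ω ↔ LSent.dis ψ ∈ Γ := by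
      intro ψ
      constructor
      · rintro (⟨h, -⟩ | h)
        · exact h
        · rcases hΩ h with ⟨χ, hχ⟩; cases hχ
      · intro h; exact Or.inl ⟨h, ⟨ψ, rfl⟩⟩
    constructor
    · intro h
      cases h with
      | Dbot h => exact WBD.Dbot h
      | WD hψ h => exact WBD.WD ((hmem _).mpr hψ) h
    · intro h
      cases h with
      | Dbot h => exact WBD.Dbot h
      | WD hψ h => exact WBD.WD ((hmem _).mp hψ) h
  · intro Γ Δ hΔ φ
    have hbels : bels ((Γ ∩ LB A) ∪ Δ) = bels Γ := by
      ext ψ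
      constructor
      · rintro (⟨h, -⟩ | h)
        · exact h
        · rcases hΔ h with ⟨χ, hχ⟩; cases hχ
      · intro h; exact Or.inl ⟨h, ⟨ψ, rfl⟩⟩
    constructor
    · intro h
      cases h with
      | B h => exact WBD.B (hbels ▸ h)
    · intro h
      cases h with
      | B h => exact WBD.B (hbels ▸ h)
end

section
/- Soundness and completeness of WBD: for every information set Γ ⊆ L and every α ∈ L, Γ ⊢_WBD α iff Γ ⊨_WBD α. -/
/-- Soundness and completeness of WBD. -/
theorem wbd_sound_complete (A : Type) (Γ : Set (LSent A)) (α : LSent A) :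
    WBD Γ α ↔ WBDent Γ α := by
  constructor
  · intro h
    induction h with
    | @B φ hc =>
      intro M 𝒩 _ hΓ v hv
      exact hc v fun ψ hψ => hΓ _ hψ v hv
    | @Dbot φ hc =>
      intro M 𝒩 h𝒩 _
      obtain ⟨N, hN⟩ := h𝒩
      refine ⟨N, hN, fun v _ => ?_⟩
      by_contra h
      have := hc v (by simp [Bool.not_eq_false] at h; simp [h])
      simp [PLForm.eval] at this
    | @WD φ ψ hmem hc =>
      intro M 𝒩 _ hΓ
      obtain ⟨N, hN, hNψ⟩ := hΓ _ hmem
      refine ⟨N, hN, fun v hv => ?_⟩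
      by_contra h
      rw [Bool.not_eq_false] at h
      have := hc v (by simp [h])
      rw [hNψ v hv] at this
      exact Bool.false_ne_true this
  · intro h
    set M : Set (A → Bool) := {v | ∀ φ ∈ bels Γ, PLForm.eval v φ = true} with hM
    set 𝒩 : Set (Set (A → Bool)) :=
      insert Set.univ ((fun ψ => {v | PLForm.eval v ψ = false}) '' diss Γ) with h𝒩
    have hsat : ∀ β ∈ Γ, satWBD M 𝒩 β := by
      intro β hβ
      cases β with
      | bel φ => exact fun v hv => hv φ hβ
      | dis ψ =>
        exact ⟨{v | PLForm.eval v ψ = false}, Or.inr ⟨ψ, hβ, rfl⟩, fun v hv => hv⟩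
    have := h M 𝒩 ⟨Set.univ, Or.inl rfl⟩ hsat
    cases α with
    | bel φ =>
      exact WBD.B (fun v hv => this v hv)
    | dis φ =>
      obtain ⟨N, hN, hNφ⟩ := this
      rcases hN with rfl | ⟨ψ, hψ, rfl⟩
      · refine WBD.Dbot (fun v hv => ?_)
        have := hNφ v (Set.mem_univ v)
        rw [hv φ rfl] at this
        exact absurd this.symm Bool.false_ne_true
      · refine WBD.WD hψ (fun v hv => ?_)
        by_contra hψv
        rw [Bool.not_eq_true] at hψv
        have := hNφ v hψv
        rw [hv φ rfl] at this
        exact Bool.false_ne_true this.symm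
end

section
/- The logic GBD satisfies the property (Rej): for every information set Γ ⊆ L and all α, β ∈ L_B, if Γ ⊢_GBD β̄ and Γ ⊢_GBD (¬(α → β))‾ then Γ ⊢_GBD ᾱ. -/
lemma gbd_dis_key {A : Type} {Γ : Set (LSent A)} {φ : PLForm A}
    (h : GBD Γ (.dis φ)) : PLCons (PLForm.neg '' diss Γ) (.neg φ) := by
  cases h with
  | Dbot h =>
      intro v hv
      simp only [PLForm.eval, Bool.not_eq_true']
      by_contra hc
      have := h v (by intro ψ hψ; cases hψ; simpa using hc)
      simp [PLForm.eval] at this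
  | GD h => exact h

/-- GBD satisfies (Rej): if `Γ ⊢ β̄` and `Γ ⊢ (¬(α → β))‾` then `Γ ⊢ ᾱ`. -/
theorem gbd_rej (A : Type) (Γ : Set (LSent A)) (α β : PLForm A)
    (h1 : GBD Γ (.dis β)) (h2 : GBD Γ (.dis (.neg (.impl α β)))) :
    GBD Γ (.dis α) := by
  apply GBD.GD
  intro v hv
  have hb := gbd_dis_key h1 v hv
  have hi := gbd_dis_key h2 v hv
  simp [PLForm.eval] at hb hi ⊢
  simp [hb] at hi
  exact hi
end

section
/- The relation ⊢_GBD satisfies (B↛D): for every information set Γ ⊆ L, every Ω ⊆ L_B, and every φ ∈ L_B, Γ ⊢_GBD φ̄ iff Γ_D ∪ Ω ⊢_GBD φ̄; and (D↛B): for every information set Γ ⊆ L, every Δ ⊆ L_D, and every φ ∈ L_B, Γ ⊢_GBD φ iff Γ_B ∪ Δ ⊢_GBD φ. -/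
lemma diss_union_eq {A : Type} (Γ Ω : Set (LSent A)) (hΩ : Ω ⊆ LB A) :
    diss ((Γ ∩ LD A) ∪ Ω) = diss Γ := by
  ext φ
  constructor
  · rintro (⟨h, -⟩ | h)
    · exact h
    · rcases hΩ h with ⟨ψ, hψ⟩; cases hψ
  · intro h
    exact Or.inl ⟨h, ⟨φ, rfl⟩⟩

lemma bels_union_eq {A : Type} (Γ Δ : Set (LSent A)) (hΔ : Δ ⊆ LD A) :
    bels ((Γ ∩ LB A) ∪ Δ) = bels Γ := by
  ext φ
  constructor
  · rintro (⟨h, -⟩ | h)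
    · exact h
    · rcases hΔ h with ⟨ψ, hψ⟩; cases hψ
  · intro h
    exact Or.inl ⟨h, ⟨φ, rfl⟩⟩

lemma gbd_dis_iff {A : Type} {Γ Γ' : Set (LSent A)} (h : diss Γ = diss Γ')
    (φ : PLForm A) : GBD Γ (.dis φ) ↔ GBD Γ' (.dis φ) := by
  constructor
  · intro hd
    cases hd with
    | Dbot h0 => exact GBD.Dbot h0
    | GD h0 => exact GBD.GD (h ▸ h0)
  · intro hd
    cases hd with
    | Dbot h0 => exact GBD.Dbot h0
    | GD h0 => exact GBD.GD (h ▸ h0)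

lemma gbd_bel_iff {A : Type} {Γ Γ' : Set (LSent A)} (h : bels Γ = bels Γ')
    (φ : PLForm A) : GBD Γ (.bel φ) ↔ GBD Γ' (.bel φ) := by
  constructor
  · intro hb
    cases hb with
    | B h0 => exact GBD.B (h ▸ h0)
  · intro hb
    cases hb with
    | B h0 => exact GBD.B (h ▸ h0)

/-- `⊢_GBD` satisfies (B↛D) and (D↛B). -/
theorem gbd_decoupled (A : Type) :
    (∀ (Γ Ω : Set (LSent A)), Ω ⊆ LB A → ∀ φ : PLForm A,
      (GBD Γ (.dis φ) ↔ GBD ((Γ ∩ LD A) ∪ Ω) (.dis φ))) ∧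
    (∀ (Γ Δ : Set (LSent A)), Δ ⊆ LD A → ∀ φ : PLForm A,
      (GBD Γ (.bel φ) ↔ GBD ((Γ ∩ LB A) ∪ Δ) (.bel φ))) := by
  constructor
  · intro Γ Ω hΩ φ
    exact gbd_dis_iff (diss_union_eq Γ Ω hΩ).symm φ
  · intro Γ Δ hΔ φ
    exact gbd_bel_iff (bels_union_eq Γ Δ hΔ).symm φ
end

section
/- Soundness and completeness of GBD: for every information set Γ ⊆ L and every α ∈ L, Γ ⊢_GBD α iff Γ ⊨_GBD α. -/
/-- Soundness and completeness of GBD. -/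
theorem gbd_sound_complete (A : Type) (Γ : Set (LSent A)) (α : LSent A) :
    GBD Γ α ↔ GBDent Γ α := by
  constructor
  · intro h
    induction h with
    | B hc =>
      intro M N hΓ v hv
      exact hc v (fun ψ hψ => hΓ _ hψ v hv)
    | Dbot hc =>
      rename_i φ
      intro M N hΓ v hv
      by_contra hne
      have heq : PLForm.eval v φ = true := by
        cases hval : PLForm.eval v φ with
        | true => rfl
        | false => exact absurd hval hne
      have := hc v (by intro ψ hψ; cases hψ; exact heq)
      simp [PLForm.eval] at this
    | GD hc =>
      intro M N hΓ v hv
      have h1 : ∀ ψ ∈ PLForm.neg '' diss Γ, PLForm.eval v ψ = true := by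
        rintro _ ⟨ψ, hψ, rfl⟩
        have := hΓ (LSent.dis ψ) hψ v hv
        simp [PLForm.eval, this]
      have := hc v h1
      simp [PLForm.eval] at this
      exact this
  · intro h
    cases α with
    | bel φ =>
      apply GBD.B
      intro v hv
      have := h {v} {w | ∀ ψ ∈ diss Γ, PLForm.eval w ψ = false}
        (by
          intro β hβ
          cases β with
          | bel ψ => intro w hw; cases hw; exact hv ψ hβ
          | dis ψ => intro w hw; exact hw ψ hβ)
      exact this v rfl
    | dis φ =>
      apply GBD.GD
      intro v hv
      have := h {w | ∀ ψ ∈ bels Γ, PLForm.eval w ψ = true}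
        {w | ∀ ψ ∈ diss Γ, PLForm.eval w ψ = false}
        (by
          intro β hβ
          cases β with
          | bel ψ => intro w hw; exact hw ψ hβ
          | dis ψ => intro w hw; exact hw ψ hβ)
      have hvN : v ∈ {w | ∀ ψ ∈ diss Γ, PLForm.eval w ψ = false} := by
        intro ψ hψ
        have := hv (PLForm.neg ψ) ⟨ψ, hψ, rfl⟩
        simp [PLForm.eval] at this
        exact this
      have := this v hvN
      simp [PLForm.eval, this]
end

section
/- The logic GBD satisfies the property (D∨): for every information set Γ ⊆ L and all φ, ψ ∈ L_B, if Γ ⊢_GBD φ̄ and Γ ⊢_GBD ψ̄ then Γ ⊢_GBD (φ ∨ ψ)‾. -/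
/-- GBD satisfies (D∨): if `Γ ⊢ φ̄` and `Γ ⊢ ψ̄` then `Γ ⊢ (φ ∨ ψ)‾`. -/
theorem gbd_dvee (A : Type) (Γ : Set (LSent A)) (φ ψ : PLForm A)
    (h1 : GBD Γ (.dis φ)) (h2 : GBD Γ (.dis ψ)) :
    GBD Γ (.dis (.disj φ ψ)) := by
  apply GBD.GD
  intro v hv
  have hφ := gbd_dis_key h1 v hv
  have hψ := gbd_dis_key h2 v hv
  simp [PLForm.eval] at hφ hψ ⊢
  exact ⟨hφ, hψ⟩
end

section
/- If the set of propositional atoms of L_PL is nonempty, then ⊢_BD does not satisfy the property (B↛D): there exist an information set Γ ⊆ L, a set Ω ⊆ L_B, and a sentence φ ∈ L_B such that it is not the case that (Γ ⊢_BD φ̄ iff Γ_D ∪ Ω ⊢_BD φ̄). -/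
/-- `⊢_BD` does not satisfy (B↛D): some `Γ`, `Ω ⊆ L_B` and `φ ∈ L_B`
witness the failure of the equivalence. -/
theorem bd_not_BnotD (A : Type) [Nonempty A] :
    ∃ (Γ Ω : Set (LSent A)) (φ : PLForm A), Ω ⊆ LB A ∧
      ¬ (BD Γ (.dis φ) ↔ BD ((Γ ∩ LD A) ∪ Ω) (.dis φ)) := by
  obtain ⟨a⟩ := ‹Nonempty A›
  refine ⟨{LSent.bel (.atom a), LSent.dis (.atom a)}, ∅, .verum,
    by simp, fun h => ?_⟩
  have hfwd : BD ({LSent.bel (.atom a), LSent.dis (.atom a)} : Set (LSent A))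
      (.dis .verum) := by
    refine BD.D (ψ := .atom a) (by simp) ?_
    intro v hv
    exact hv (.atom a) (Or.inr (by simp [bels]))
  have h2 := h.mp hfwd
  -- the reduced set
  set Γ' : Set (LSent A) :=
    (({LSent.bel (.atom a), LSent.dis (.atom a)} : Set (LSent A)) ∩ LD A) ∪ ∅
    with hΓ'
  have hb : bels Γ' = ∅ := by
    ext φ
    simp [bels, hΓ', LD, Set.range]
  have hmem : ∀ ψ : PLForm A, LSent.dis ψ ∈ Γ' → ψ = .atom a := by
    intro ψ hψ
    rcases hψ with h' | h'
    · rcases h'.1 with h'' | h'' <;> simpa using h''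
    · simp at h'
  cases h2 with
  | Dbot h3 =>
      have := h3 (fun _ => false) (by intro ψ hψ; simp at hψ; subst hψ; rfl)
      simp [PLForm.eval] at this
  | D hψ h3 =>
      rename_i φ' ψ
      have hψa := hmem ψ hψ
      subst hψa
      have := h3 (fun _ => false) ?_
      · simp [PLForm.eval] at this
      · intro χ hχ
        rcases hχ with h' | h'
        · subst h'; rfl
        · rw [hb] at h'; simp at h'
end

section
/- The relation ⊢_BD satisfies (D↛B): for every information set Γ ⊆ L, every Δ ⊆ L_D, and every φ ∈ L_B, Γ ⊢_BD φ iff Γ_B ∪ Δ ⊢_BD φ. -/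
/-- `⊢_BD` satisfies (D↛B). -/
theorem bd_DnotB (A : Type) (Γ Δ : Set (LSent A)) (hΔ : Δ ⊆ LD A)
    (φ : PLForm A) :
    BD Γ (.bel φ) ↔ BD ((Γ ∩ LB A) ∪ Δ) (.bel φ) := by
  have hbels : bels ((Γ ∩ LB A) ∪ Δ) = bels Γ := by
    ext ψ
    simp only [bels, Set.mem_setOf_eq, Set.mem_union, Set.mem_inter_iff]
    constructor
    · rintro (⟨h, _⟩ | h)
      · exact h
      · rcases hΔ h with ⟨χ, hχ⟩; cases hχ
    · intro h
      exact Or.inl ⟨h, ⟨ψ, rfl⟩⟩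
  constructor
  · intro h
    cases h with
    | B hc => exact BD.B (hbels ▸ hc)
  · intro h
    cases h with
    | B hc => exact BD.B (hbels ▸ hc)
end

section
/- If the set of propositional atoms of L_PL is nonempty, then there exists an information set Γ ⊆ L that is BD-inconsistent but not B-inconsistent (so the converse of 'B-inconsistent implies BD-inconsistent' fails). -/
/-- The converse fails: some BD-inconsistent `Γ` is not B-inconsistent. -/
theorem bdIncons_not_bIncons (A : Type) [Nonempty A] :
    ∃ Γ : Set (LSent A), BDIncons Γ ∧ ¬ BIncons Γ := by
  obtain ⟨a⟩ := ‹Nonempty A›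
  refine ⟨{LSent.bel (.atom a), LSent.dis (.atom a)}, ⟨.atom a, ?_, ?_⟩, ?_⟩
  · exact BD.B (fun v h => h _ (by simp [bels]))
  · exact BD.D (φ := .atom a) (ψ := .atom a) (by simp)
      (fun v h => h _ (Set.mem_insert _ _))
  · intro h
    cases h with
    | B hc =>
      have := hc (fun _ => true) ?_
      · simp [PLForm.eval] at this
      · rintro ψ hψ
        simp only [bels, Set.mem_setOf_eq, Set.mem_inter_iff] at hψ
        rcases hψ.1 with h1 | h1 <;> simp_all [PLForm.eval]
end

section
/- Lottery-paradox consistency in BD: let φ₁, …, φₙ ∈ L_B (n ≥ 1) and let Γ = {φ̄₁, …, φ̄ₙ} ∪ {φ₁ ∨ ⋯ ∨ φₙ}. If for each i the set {φ₁ ∨ ⋯ ∨ φₙ, ¬φᵢ} is satisfiable by some classical valuation (equivalently, φ₁ ∨ ⋯ ∨ φₙ ⊬_PL φᵢ), then Γ is neither B-inconsistent nor BD-inconsistent. -/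
/-- Lottery-paradox consistency in BD: if each `{φ₁ ∨ ⋯ ∨ φₙ, ¬φᵢ}` is
classically satisfiable, then `{φ̄₁, …, φ̄ₙ, φ₁ ∨ ⋯ ∨ φₙ}` is neither
B-inconsistent nor BD-inconsistent. -/
theorem bd_lottery (A : Type) (φs : List (PLForm A)) (hne : φs ≠ [])
    (hsat : ∀ φ ∈ φs, ∃ v : A → Bool,
      PLForm.eval v (φs.foldr PLForm.disj PLForm.falsum) = true ∧
        PLForm.eval v φ = false) :
    ¬ BIncons ((LSent.dis '' {φ | φ ∈ φs}) ∪
        {LSent.bel (φs.foldr PLForm.disj PLForm.falsum)}) ∧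
    ¬ BDIncons ((LSent.dis '' {φ | φ ∈ φs}) ∪
        {LSent.bel (φs.foldr PLForm.disj PLForm.falsum)}) := by
  set D := φs.foldr PLForm.disj PLForm.falsum with hD
  set Γ : Set (LSent A) := (LSent.dis '' {φ | φ ∈ φs}) ∪ {LSent.bel D} with hΓ
  obtain ⟨φ₀, hφ₀⟩ := List.exists_mem_of_ne_nil φs hne
  obtain ⟨v₀, hv₀D, _⟩ := hsat φ₀ hφ₀
  have hbels : bels Γ = {D} := by
    ext ψ
    simp only [bels, hΓ, Set.mem_union, Set.mem_image, Set.mem_setOf_eq,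
      Set.mem_singleton_iff]
    constructor
    · rintro (⟨x, _, h⟩ | h)
      · exact absurd h (by simp)
      · exact (LSent.bel.injEq _ _).mp h.symm |>.symm
    · rintro rfl; exact Or.inr rfl
  have hbelsB : bels (Γ ∩ LB A) = {D} := by
    rw [← hbels]
    ext ψ
    simp only [bels, Set.mem_inter_iff, Set.mem_setOf_eq]
    exact ⟨fun h => h.1, fun h => ⟨h, ⟨ψ, rfl⟩⟩⟩
  constructor
  · intro h
    cases h with
    | B hc =>
      have := hc v₀ (by
        intro ψ hψ
        rw [hbelsB, Set.mem_singleton_iff] at hψ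
        rw [hψ]; exact hv₀D)
      simp [PLForm.eval] at this
  · rintro ⟨φ, hb, hd⟩
    have hc : PLCons (bels Γ) φ := by cases hb with | B hc => exact hc
    cases hd with
    | Dbot h2 =>
      have hφ : PLForm.eval v₀ φ = true := by
        apply hc v₀
        intro ψ hψ
        rw [hbels, Set.mem_singleton_iff] at hψ
        rw [hψ]; exact hv₀D
      have := h2 v₀ (by
        intro ψ hψ
        rw [Set.mem_singleton_iff] at hψ
        rw [hψ]; exact hφ)
      simp [PLForm.eval] at this
    | D hmem hcons =>
      rename_i ψ
      have hψs : ψ ∈ φs := by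
        rcases hmem with ⟨x, hx, h⟩ | h
        · cases h; exact hx
        · exact absurd h (by simp)
      obtain ⟨v, hvD, hvψ⟩ := hsat ψ hψs
      have hφ : PLForm.eval v φ = true := by
        apply hc v
        intro χ hχ
        rw [hbels, Set.mem_singleton_iff] at hχ
        rw [hχ]; exact hvD
      have := hcons v (by
        intro χ hχ
        rcases hχ with rfl | hχ
        · exact hφ
        · rw [hbels, Set.mem_singleton_iff] at hχ
          rw [hχ]; exact hvD)
      rw [hvψ] at this
      exact Bool.false_ne_true this
end

section
/- In BD, disbelieving the tautology yields all disbeliefs but leaves beliefs unaffected: for every information set Γ ⊆ L and every φ ∈ L_B, (i) Γ ∪ {⊤̄} ⊢_BD φ̄, and (ii) Γ ∪ {⊤̄} ⊢_BD φ if and only if Γ ⊢_BD φ. -/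
/-- In BD, disbelieving the tautology yields every disbelief but leaves
the beliefs unaffected. -/
theorem bd_disbelieve_top (A : Type) (Γ : Set (LSent A)) (φ : PLForm A) :
    BD (insert (LSent.dis .verum) Γ) (.dis φ) ∧
    (BD (insert (LSent.dis .verum) Γ) (.bel φ) ↔ BD Γ (.bel φ)) := by
  have hbels : bels (insert (LSent.dis .verum) Γ) = bels Γ := by
    ext ψ; simp [bels]
  constructor
  · exact BD.D (ψ := .verum) (Set.mem_insert _ _) (fun v _ => rfl)
  · constructor
    · intro h
      cases h with
      | B hc => exact BD.B (hbels ▸ hc)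
    · intro h
      cases h with
      | B hc => exact BD.B (hbels ▸ hc)
end
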